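/- For all integers n ≥ 0 and m ≥ 1, ∑_{p=0}^{⌊n/4⌋} (m/(5p+m))·C(5p+m, p)·C(n+p+m−1, n−4p) = ∑_{p=0}^{⌊n/2⌋} (−1)^p·(m/(m+n))·C(m+n+p−1, p)·C(m+2n−2p−1, n−2p), as an identity of rational numbers. -/

import Mathlib

open Finset PowerSeries

noncomputable section
namespace FiveCatalanAux

def psi : ℚ⟦X⟧ := 1 - X + X^2 - X^3
def Phi : ℚ⟦X⟧ := psi⁻¹
def dd : ℚ⟦X⟧ := 1 - 2*X + 3*X^2 - 4*X^3
def dpsi : ℚ⟦X⟧ := -1 + 2*X - 3*X^2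

lemma constCoeff_psi : constantCoeff psi = 1 := by
  simp [psi]

lemma psi_Phi : psi * Phi = 1 :=
  PowerSeries.mul_inv_cancel _ (by rw [constCoeff_psi]; norm_num)

lemma constCoeff_Phi : constantCoeff Phi = 1 := by
  have := congrArg (constantCoeff) psi_Phi
  simpa [constCoeff_psi] using this

lemma deriv_psi : d⁄dX ℚ psi = dpsi := by
  have h2 : d⁄dX ℚ ((X : ℚ⟦X⟧)^2) = 2 * X := by
    rw [Derivation.leibniz_pow]
    simp
  have h3 : d⁄dX ℚ ((X : ℚ⟦X⟧)^3) = 3 * X^2 := by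
    rw [Derivation.leibniz_pow]
    simp
  have h1 : d⁄dX ℚ (1 : ℚ⟦X⟧) = 0 := Derivation.map_one_eq_zero _
  rw [psi, dpsi]
  simp only [sub_eq_add_neg, map_add, map_neg, h1, h2, h3, PowerSeries.derivative_X]
  ring

lemma dd_eq : dd = psi + X * dpsi := by
  rw [dd, psi, dpsi]; ring

lemma dpsi_Phi_eq (N : ℕ) : dpsi * Phi^(N+2) = -(d⁄dX ℚ Phi) * Phi^N := by
  have h : dpsi * Phi + psi * d⁄dX ℚ Phi = 0 := by
    have := congrArg (d⁄dX ℚ) psi_Phi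
    rw [Derivation.leibniz, Derivation.map_one_eq_zero] at this
    rw [← deriv_psi]
    rw [smul_eq_mul, smul_eq_mul] at this
    linear_combination this
  have : dpsi * Phi^(N+2) = (dpsi * Phi) * Phi^(N+1) := by ring
  rw [this]
  have h2 : dpsi * Phi = -(psi * d⁄dX ℚ Phi) := by linear_combination h
  rw [h2]
  have : -(psi * d⁄dX ℚ Phi) * Phi ^ (N + 1) = -(d⁄dX ℚ Phi) * Phi^N * (psi * Phi) := by ring
  rw [this, psi_Phi, mul_one]


lemma coeff_dd_Phi (s : ℕ) : coeff s (dd * Phi^(s+1)) = if s = 0 then 1 else 0 := by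
  cases s with
  | zero =>
    rw [if_pos rfl, pow_one, PowerSeries.coeff_zero_eq_constantCoeff, map_mul, constCoeff_Phi]
    simp [dd]
  | succ k =>
    have hsplit : dd * Phi^(k+2) = Phi^(k+1) + X * (dpsi * Phi^(k+2)) := by
      rw [dd_eq]
      have h : (psi + X*dpsi) * Phi^(k+2) = psi*Phi*Phi^(k+1) + X*(dpsi*Phi^(k+2)) := by ring
      rw [h, psi_Phi, one_mul]
    rw [hsplit, map_add, PowerSeries.coeff_succ_X_mul, dpsi_Phi_eq k]
    have hd : d⁄dX ℚ (Phi^(k+1)) = (k+1 : ℕ) • (Phi^k • d⁄dX ℚ Phi) := by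
      simpa using Derivation.leibniz_pow (d⁄dX ℚ) (a := Phi) (k+1)
    have hc : coeff k (d⁄dX ℚ (Phi^(k+1))) = coeff (k+1) (Phi^(k+1)) * (k+1) :=
      PowerSeries.coeff_derivative _ _
    rw [hd] at hc
    rw [map_nsmul, smul_eq_mul, nsmul_eq_mul] at hc
    have hk1 : ((k:ℚ)+1) ≠ 0 := by positivity
    have hA : coeff k (Phi^k * d⁄dX ℚ Phi) = coeff (k+1) (Phi^(k+1)) := by
      apply mul_left_cancel₀ hk1
      push_cast at hc ⊢
      linarith
    have hB : -(d⁄dX ℚ Phi) * Phi^k = -(Phi^k * d⁄dX ℚ Phi) := by ring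
    rw [hB, map_neg, hA]
    simp

lemma Phi_eq : Phi = 1 + X + X^4 * Phi := by
  have h : (1 - X^4 : ℚ⟦X⟧) = (1+X) * psi := by rw [psi]; ring
  have h2 : (1 - X^4) * Phi = 1 + X := by
    rw [h]
    have h3 : (1+X)*psi*Phi = (1+X)*(psi*Phi) := by ring
    rw [h3, psi_Phi, mul_one]
  linear_combination h2

lemma dd_Phi_key (N : ℕ) :
    dd * Phi^(N+1) = dd*Phi^N + X*(dd*Phi^N) + X^4*(dd*Phi^(N+1)) := by
  calc dd * Phi^(N+1) = (dd*Phi^N) * Phi := by ring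
  _ = (dd*Phi^N) * (1 + X + X^4*Phi) := by rw [← Phi_eq]
  _ = dd*Phi^N + X*(dd*Phi^N) + X^4*(dd*Phi^(N+1)) := by ring

def R (n m : ℕ) : ℚ := coeff n (dd * Phi ^ (m + n + 1))

lemma R_zero (m : ℕ) : R 0 m = 1 := by
  rw [R, PowerSeries.coeff_zero_eq_constantCoeff, map_mul, map_pow, constCoeff_Phi]
  simp [dd]

lemma R_n_zero (n : ℕ) (hn : 1 ≤ n) : R n 0 = 0 := by
  rw [R]
  have h := coeff_dd_Phi n
  rw [if_neg (by omega)] at h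
  have e : 0 + n + 1 = n + 1 := by omega
  rw [e, h]

lemma R_rec (n m : ℕ) (hn : 1 ≤ n) :
    R n (m+1) = R (n-1) (m+1) + R n m + (if 4 ≤ n then R (n-4) (m+5) else 0) := by
  obtain ⟨k, rfl⟩ : ∃ k, n = k + 1 := ⟨n-1, by omega⟩
  have e1 : (m+1) + (k+1) + 1 = (m+k+2) + 1 := by omega
  have r0 : R (k+1) (m+1) = coeff (k+1) (dd * Phi^((m+k+2)+1)) := by rw [R, e1]
  have r1 : R (k+1) m = coeff (k+1) (dd * Phi^(m+k+2)) := by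
    have e : m + (k+1) + 1 = m+k+2 := by omega
    rw [R, e]
  have r2 : R ((k+1)-1) (m+1) = coeff k (dd * Phi^(m+k+2)) := by
    have ei : (k+1)-1 = k := rfl
    have e : (m+1) + k + 1 = m+k+2 := by omega
    rw [R, ei, e]
  rw [r0, dd_Phi_key (m+k+2), map_add, map_add, PowerSeries.coeff_succ_X_mul,
    PowerSeries.coeff_X_pow_mul', r1, r2]
  have hif : (if 4 ≤ k+1 then coeff (k+1-4) (dd * Phi^((m+k+2)+1)) else 0)
      = (if 4 ≤ k+1 then R ((k+1)-4) (m+5) else 0) := by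
    by_cases h4 : 4 ≤ k+1
    · rw [if_pos h4, if_pos h4, R]
      have i1 : (k+1)-4 = k-3 := by omega
      have e2 : (m+5)+(k-3)+1 = (m+k+2)+1 := by omega
      rw [i1, e2]
    · rw [if_neg h4, if_neg h4]
  rw [hif]
  ring


def MW (a : ℕ) : ℚ⟦X⟧ := mk fun k => (Nat.choose (a+k) k : ℚ)

def MV (a : ℕ) : ℚ⟦X⟧ :=
  mk fun k => if k % 2 = 0 then ((-1:ℚ)^(k/2) * (Nat.choose (a + k/2) (k/2) : ℚ)) else 0

lemma MW_step (a : ℕ) : (1 - X) * MW (a+1) = MW a := by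
  ext j
  rw [sub_mul, one_mul, map_sub]
  cases j with
  | zero =>
    simp [MW]
  | succ i =>
    rw [PowerSeries.coeff_succ_X_mul]
    simp only [MW, PowerSeries.coeff_mk]
    have e1 : a+1+(i+1) = (a+(i+1))+1 := by omega
    have e2 : a+1+i = a+(i+1) := by omega
    rw [e1, e2, Nat.choose_succ_succ (a+(i+1)) i]
    push_cast
    ring

lemma MW_inv (a : ℕ) : (1-X)^(a+1) * MW a = 1 := by
  induction a with
  | zero =>
    rw [pow_one]
    ext j
    rw [sub_mul, one_mul, map_sub]
    cases j with
    | zero =>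
      simp [MW]
    | succ i =>
      rw [PowerSeries.coeff_succ_X_mul]
      simp [MW]
  | succ a ih =>
    have : (1-X)^(a+1+1) * MW (a+1) = (1-X)^(a+1) * ((1-X) * MW (a+1)) := by ring
    rw [this, MW_step, ih]

lemma MV_step (a : ℕ) : (1 + X^2) * MV (a+1) = MV a := by
  ext j
  rw [add_mul, one_mul, map_add, PowerSeries.coeff_X_pow_mul']
  by_cases h2 : 2 ≤ j
  · rw [if_pos h2]
    by_cases hp : j % 2 = 0
    · obtain ⟨p, rfl⟩ : ∃ p, j = 2*p+2 := ⟨(j-2)/2, by omega⟩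
      simp only [MV, PowerSeries.coeff_mk]
      have m1 : (2*p+2) % 2 = 0 := by omega
      have m2 : (2*p+2) / 2 = p+1 := by omega
      have m3 : (2*p+2-2) % 2 = 0 := by omega
      have m4 : (2*p+2-2) / 2 = p := by omega
      rw [if_pos m1, if_pos m3, if_pos m1, m2, m4]
      have e1 : a+1+(p+1) = (a+(p+1))+1 := by omega
      have e2 : a+1+p = a+(p+1) := by omega
      rw [e1, e2, Nat.choose_succ_succ (a+(p+1)) p]
      push_cast
      ring
    · obtain ⟨p, rfl⟩ : ∃ p, j = 2*p+3 := ⟨(j-3)/2, by omega⟩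
      simp only [MV, PowerSeries.coeff_mk]
      have m1 : ¬ ((2*p+3) % 2 = 0) := by omega
      have m3 : ¬ ((2*p+3-2) % 2 = 0) := by omega
      rw [if_neg m1, if_neg m3, if_neg m1]
      ring
  · rw [if_neg h2]
    interval_cases j
    · simp [MV]
    · simp [MV]

lemma MV_inv (a : ℕ) : (1+X^2)^(a+1) * MV a = 1 := by
  induction a with
  | zero =>
    rw [pow_one]
    ext j
    rw [add_mul, one_mul, map_add, PowerSeries.coeff_X_pow_mul']
    by_cases h2 : 2 ≤ j
    · rw [if_pos h2]
      by_cases hp : j % 2 = 0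
      · obtain ⟨p, rfl⟩ : ∃ p, j = 2*p+2 := ⟨(j-2)/2, by omega⟩
        simp only [MV, PowerSeries.coeff_mk]
        have m1 : (2*p+2) % 2 = 0 := by omega
        have m2 : (2*p+2) / 2 = p+1 := by omega
        have m3 : (2*p+2-2) % 2 = 0 := by omega
        have m4 : (2*p+2-2) / 2 = p := by omega
        rw [if_pos m1, if_pos m3, m2, m4]
        have hne : ¬ (2*p+2 = 0) := by omega
        rw [PowerSeries.coeff_one, if_neg hne]
        simp [pow_succ]
      · obtain ⟨p, rfl⟩ : ∃ p, j = 2*p+3 := ⟨(j-3)/2, by omega⟩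
        simp only [MV, PowerSeries.coeff_mk]
        have m1 : ¬ ((2*p+3) % 2 = 0) := by omega
        have m3 : ¬ ((2*p+3-2) % 2 = 0) := by omega
        rw [if_neg m1, if_neg m3]
        have hne : ¬ (2*p+3 = 0) := by omega
        rw [PowerSeries.coeff_one, if_neg hne]
        ring
    · rw [if_neg h2]
      interval_cases j
      · simp [MV]
      · simp [MV]
  | succ a ih =>
    have : (1+X^2)^(a+1+1) * MV (a+1) = (1+X^2)^(a+1) * ((1+X^2) * MV (a+1)) := by ring
    rw [this, MV_step, ih]

lemma psi_factor : psi = (1-X)*(1+X^2) := by rw [psi]; ring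

lemma Phi_pow (a : ℕ) : Phi^(a+1) = MV a * MW a := by
  have h1 : psi^(a+1) * (MV a * MW a) = 1 := by
    rw [psi_factor, mul_pow]
    have h2 : ((1-X)^(a+1) * (1+X^2)^(a+1)) * (MV a * MW a)
        = ((1-X)^(a+1) * MW a) * ((1+X^2)^(a+1) * MV a) := by ring
    rw [h2, MW_inv, MV_inv, one_mul]
  calc Phi^(a+1) = Phi^(a+1) * (psi^(a+1) * (MV a * MW a)) := by rw [h1, mul_one]
  _ = (psi*Phi)^(a+1) * (MV a * MW a) := by ring
  _ = MV a * MW a := by rw [psi_Phi, one_pow, one_mul]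

lemma coeff_Phi_pow (a n : ℕ) : coeff n (Phi^(a+1)) =
    ∑ p ∈ range (n/2+1),
      (-1:ℚ)^p * (Nat.choose (a+p) p : ℚ) * (Nat.choose (a+(n-2*p)) (n-2*p) : ℚ) := by
  rw [Phi_pow, PowerSeries.coeff_mul, Finset.Nat.sum_antidiagonal_eq_sum_range_succ_mk]
  simp only [MV, MW, PowerSeries.coeff_mk]
  rw [← Finset.sum_filter_of_ne (p := fun k => k % 2 = 0)]
  · have himg : (range (n+1)).filter (fun k => k % 2 = 0)
        = (range (n/2+1)).image (fun p => 2*p) := by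
      ext k
      simp only [mem_filter, mem_image, mem_range]
      constructor
      · rintro ⟨hk, he⟩
        exact ⟨k/2, by omega, by omega⟩
      · rintro ⟨p, hp, rfl⟩
        exact ⟨by omega, by omega⟩
    rw [himg, Finset.sum_image (by intro x _ y _ h; simp only at h; omega)]
    refine Finset.sum_congr rfl ?_
    intro p hp
    have m1 : (2*p) % 2 = 0 := by omega
    have m2 : (2*p) / 2 = p := by omega
    rw [if_pos m1, m2]
  · intro k _ hne
    by_contra hodd
    rw [if_neg hodd] at hne
    simp at hne

lemma R_bridge (n m : ℕ) (hm : 1 ≤ m) :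
    ((m:ℚ)+n) * R n m = m * coeff n (Phi^(m+n)) := by
  cases n with
  | zero =>
    rw [R_zero, PowerSeries.coeff_zero_eq_constantCoeff, map_pow, constCoeff_Phi]
    simp
  | succ k =>
    have hsplit : dd * Phi^((m+k+1)+1) = Phi^(m+k+1) + X * (dpsi * Phi^(m+k+2)) := by
      rw [dd_eq]
      have h : (psi + X*dpsi) * Phi^(m+k+2) = psi*Phi*Phi^(m+k+1) + X*(dpsi*Phi^(m+k+2)) := by ring
      rw [show (m+k+1)+1 = m+k+2 from rfl, h, psi_Phi, one_mul]
    have r0 : R (k+1) m = coeff (k+1) (dd * Phi^((m+k+1)+1)) := by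
      have e : m + (k+1) + 1 = (m+k+1)+1 := by omega
      rw [R, e]
    rw [r0, hsplit, map_add, PowerSeries.coeff_succ_X_mul, dpsi_Phi_eq (m+k)]
    have hd : d⁄dX ℚ (Phi^(m+k+1)) = (m+k+1 : ℕ) • (Phi^(m+k) • d⁄dX ℚ Phi) := by
      simpa using Derivation.leibniz_pow (d⁄dX ℚ) (a := Phi) (m+k+1)
    have hc : coeff k (d⁄dX ℚ (Phi^(m+k+1))) = coeff (k+1) (Phi^(m+k+1)) * (k+1) :=
      PowerSeries.coeff_derivative _ _
    rw [hd, map_nsmul, smul_eq_mul, nsmul_eq_mul] at hc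
    have hB : -(d⁄dX ℚ Phi) * Phi^(m+k) = -(Phi^(m+k) * d⁄dX ℚ Phi) := by ring
    rw [hB, map_neg]
    have e2 : m + (k+1) = m+k+1 := by omega
    rw [e2]
    push_cast at hc ⊢
    linear_combination coeff (k + 1) (Phi ^ (m + k + 1)) * ((m:ℚ)+k+1) - hc


lemma RHS_eq (n m : ℕ) (hm : 1 ≤ m) :
    ∑ p ∈ range (n/2+1), (-1:ℚ)^p * ((m:ℚ)/(m+n)) * (Nat.choose (m+n+p-1) p : ℚ) *
      (Nat.choose (m+2*n-2*p-1) (n-2*p) : ℚ) = R n m := by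
  obtain ⟨a, ha⟩ : ∃ a, m + n = a + 1 := ⟨m+n-1, by omega⟩
  have hsum : ∑ p ∈ range (n/2+1), (-1:ℚ)^p * ((m:ℚ)/(m+n)) * (Nat.choose (m+n+p-1) p : ℚ) *
      (Nat.choose (m+2*n-2*p-1) (n-2*p) : ℚ)
      = ((m:ℚ)/(m+n)) * coeff n (Phi^(m+n)) := by
    rw [ha, coeff_Phi_pow, Finset.mul_sum]
    refine Finset.sum_congr rfl ?_
    intro p hp
    have hp' : p < n/2+1 := Finset.mem_range.mp hp
    have h2p : 2*p ≤ n := by omega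
    have i1 : a+1+p-1 = a+p := by omega
    have i2 : m+2*n-2*p-1 = a+(n-2*p) := by omega
    rw [i1, i2]
    ring
  rw [hsum]
  have hbr := R_bridge n m hm
  have hm' : (1:ℚ) ≤ (m:ℚ) := by exact_mod_cast hm
  have hn' : (0:ℚ) ≤ (n:ℚ) := by positivity
  have hne : ((m:ℚ)+n) ≠ 0 := by linarith
  field_simp
  linarith [hbr]

def cc (m p : ℕ) : ℚ := ((m:ℚ)/(5*p+m)) * (Nat.choose (5*p+m) p : ℚ)

def T (n m p : ℕ) : ℚ :=
  if 4*p ≤ n then cc m p * (Nat.choose (n+p+m-1) (n-4*p) : ℚ) else 0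

def A (n m : ℕ) : ℚ := ∑ p ∈ range (n+1), T n m p

lemma cc_zero_eq (m : ℕ) (hm : 1 ≤ m) : cc m 0 = 1 := by
  have hm0 : (m:ℚ) ≠ 0 := by
    have : (1:ℚ) ≤ (m:ℚ) := by exact_mod_cast hm
    linarith
  rw [cc]
  simp [div_self hm0]

lemma cc_zero_zero : cc 0 0 = 0 := by simp [cc]

lemma cc_m_zero (p : ℕ) : cc 0 p = 0 := by simp [cc]

lemma cc_identity (m q : ℕ) : cc (m+1) (q+1) = cc m (q+1) + cc (m+5) q := by
  have h1 := Nat.choose_mul_succ_eq (5*(q+1)+m) (q+1)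
  have h2 := Nat.choose_succ_right_eq (5*(q+1)+m) q
  have e1 : 5*(q+1)+m+1 - (q+1) = 4*q+m+5 := by omega
  have e2 : 5*(q+1)+m - q = 4*q+m+5 := by omega
  rw [e1] at h1
  rw [e2] at h2
  have hE : (4*(q:ℚ)+(m:ℚ)+5) ≠ 0 := by positivity
  have h1q : ((Nat.choose (5*(q+1)+m+1) (q+1) : ℚ))
      = (Nat.choose (5*(q+1)+m) (q+1) : ℚ) * (5*(q:ℚ)+(m:ℚ)+6) / (4*(q:ℚ)+(m:ℚ)+5) := by
    rw [eq_div_iff hE]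
    have h1' : ((Nat.choose (5*(q+1)+m) (q+1) : ℚ)) * ((5*(q+1)+m+1 : ℕ) : ℚ)
        = (Nat.choose (5*(q+1)+m+1) (q+1) : ℚ) * ((4*q+m+5 : ℕ) : ℚ) := by
      exact_mod_cast h1
    push_cast at h1'
    linear_combination -h1'
  have h2q : ((Nat.choose (5*(q+1)+m) q : ℚ))
      = (Nat.choose (5*(q+1)+m) (q+1) : ℚ) * ((q:ℚ)+1) / (4*(q:ℚ)+(m:ℚ)+5) := by
    rw [eq_div_iff hE]
    have h2' : ((Nat.choose (5*(q+1)+m) (q+1) : ℚ)) * (((q:ℕ)+1 : ℕ) : ℚ)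
        = (Nat.choose (5*(q+1)+m) q : ℚ) * ((4*q+m+5 : ℕ) : ℚ) := by
      exact_mod_cast h2
    push_cast at h2'
    linear_combination -h2'
  rw [cc, cc, cc]
  have i1 : 5*(q+1)+(m+1) = 5*(q+1)+m+1 := by omega
  have i2 : 5*q+(m+5) = 5*(q+1)+m := by omega
  rw [i1, i2, h1q, h2q]
  have d1 : (5*(((q:ℚ))+1)+((m:ℚ)+1)) ≠ 0 := by positivity
  have d2 : (5*(((q:ℚ))+1)+(m:ℚ)) ≠ 0 := by positivity
  have d3 : (5*((q:ℚ))+((m:ℚ)+5)) ≠ 0 := by positivity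
  push_cast
  field_simp
  ring


lemma T_of_le {n m p : ℕ} (h : 4*p ≤ n) :
    T n m p = cc m p * (Nat.choose (n+p+m-1) (n-4*p) : ℚ) := by rw [T, if_pos h]

lemma T_of_gt {n m p : ℕ} (h : ¬ 4*p ≤ n) : T n m p = 0 := by rw [T, if_neg h]

lemma T_rec (n m p : ℕ) (hn : 1 ≤ n) :
    T n (m+1) p = T (n-1) (m+1) p + T n m p +
      (if 4 ≤ n then (if p = 0 then 0 else T (n-4) (m+5) (p-1)) else 0) := by
  by_cases h4p : 4*p ≤ n
  · cases p with
    | zero =>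
      have hlast : (if 4 ≤ n then (if (0:ℕ) = 0 then (0:ℚ) else T (n-4) (m+5) (0-1)) else 0)
          = 0 := by
        split_ifs with h1 h2
        · rfl
        · exact absurd rfl h2
        · rfl
      rw [hlast, add_zero, T_of_le (by omega : 4*0 ≤ n),
        T_of_le (by omega : 4*0 ≤ n-1), T_of_le (by omega : 4*0 ≤ n)]
      have j2 : n-4*0 = n := by omega
      have j4 : (n-1)-4*0 = n-1 := by omega
      rw [j2, j4]
      rw [cc_zero_eq (m+1) (by omega), one_mul, one_mul]
      cases m with
      | zero =>
        rw [cc_m_zero, zero_mul, add_zero]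
        have i1 : n+0+(0+1)-1 = n := by omega
        have i2 : (n-1)+0+(0+1)-1 = n-1 := by omega
        rw [i1, i2, Nat.choose_self, Nat.choose_self]
        norm_num
      | succ m' =>
        rw [cc_zero_eq (m'+1) (by omega), one_mul]
        obtain ⟨k, rfl⟩ : ∃ k, n = k+1 := ⟨n-1, by omega⟩
        have i1 : k+1+0+(m'+1+1)-1 = (k+m'+1)+1 := by omega
        have i2 : (k+1-1)+0+(m'+1+1)-1 = k+m'+1 := by omega
        have i3 : k+1-1 = k := by omega
        have i4 : k+1+0+(m'+1)-1 = k+m'+1 := by omega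
        rw [i1, i2, i3, i4, Nat.choose_succ_succ (k+m'+1) k]
        push_cast; ring
    | succ q =>
      have hn4 : 4 ≤ n := by omega
      rw [if_pos hn4, if_neg (Nat.succ_ne_zero q)]
      have iq : (q+1)-1 = q := rfl
      rw [iq]
      have hg4 : 4*q ≤ n-4 := by omega
      by_cases hlt : 4*(q+1) ≤ n-1
      · rw [T_of_le h4p, T_of_le hlt, T_of_le h4p, T_of_le hg4]
        obtain ⟨s, hs⟩ : ∃ s, n-4*(q+1) = s+1 := ⟨n-4*(q+1)-1, by omega⟩
        have i1 : n+(q+1)+(m+1)-1 = (n+q+m)+1 := by omega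
        have i2 : (n-1)+(q+1)+(m+1)-1 = n+q+m := by omega
        have i3 : (n-1)-4*(q+1) = s := by omega
        have i4 : n+(q+1)+m-1 = n+q+m := by omega
        have i5 : (n-4)+q+(m+5)-1 = n+q+m := by omega
        have i6 : (n-4)-4*q = s+1 := by omega
        rw [i1, i2, i3, i4, i5, i6, hs, Nat.choose_succ_succ (n+q+m) s, cc_identity m q]
        push_cast; ring
      · rw [T_of_le h4p, T_of_gt hlt, T_of_le h4p, T_of_le hg4]
        have i1 : n-4*(q+1) = 0 := by omega
        have i6 : (n-4)-4*q = 0 := by omega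
        rw [i1, i6, cc_identity m q]
        simp only [Nat.choose_zero_right]
        push_cast; ring
  · have hlast : (if 4 ≤ n then (if p = 0 then (0:ℚ) else T (n-4) (m+5) (p-1)) else 0)
        = 0 := by
      split_ifs with hn4 hp0
      · rfl
      · exact T_of_gt (by omega)
      · rfl
    rw [hlast, T_of_gt h4p, T_of_gt (by omega : ¬ 4*p ≤ n-1), T_of_gt h4p]
    ring

lemma A_rec (n m : ℕ) (hn : 1 ≤ n) :
    A n (m+1) = A (n-1) (m+1) + A n m + (if 4 ≤ n then A (n-4) (m+5) else 0) := by
  have h1 : A n (m+1) = ∑ p ∈ range (n+1), (T (n-1) (m+1) p + T n m p +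
      (if 4 ≤ n then (if p = 0 then 0 else T (n-4) (m+5) (p-1)) else 0)) := by
    rw [A]; exact Finset.sum_congr rfl fun p _ => T_rec n m p hn
  rw [h1, Finset.sum_add_distrib, Finset.sum_add_distrib]
  have p1 : ∑ p ∈ range (n+1), T (n-1) (m+1) p = A (n-1) (m+1) := by
    rw [A]
    have e : (n-1)+1 = n := by omega
    rw [e, Finset.sum_range_succ, T_of_gt (by omega : ¬ 4*n ≤ n-1), add_zero]
  have p2 : ∑ p ∈ range (n+1), T n m p = A n m := rfl
  have p3 : (∑ p ∈ range (n+1),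
        if 4 ≤ n then (if p = 0 then (0:ℚ) else T (n-4) (m+5) (p-1)) else 0)
      = (if 4 ≤ n then A (n-4) (m+5) else 0) := by
    by_cases hn4 : 4 ≤ n
    · simp only [if_pos hn4]
      rw [Finset.sum_range_succ']
      simp only [Nat.succ_ne_zero, if_false, if_true, Nat.add_sub_cancel, add_zero]
      rw [A]
      have hsub : range (n-4+1) ⊆ range n := by
        intro x hx
        simp only [mem_range] at hx ⊢
        omega
      refine (Finset.sum_subset hsub fun x hx1 hx2 => ?_).symm
      refine T_of_gt (n := n-4) (m := m+5) (p := x) ?_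
      simp only [mem_range, not_lt] at hx2
      omega
    · simp only [if_neg hn4]
      simp
  rw [p1, p2, p3]

lemma A_zero (m : ℕ) (hm : 1 ≤ m) : A 0 m = 1 := by
  rw [A]
  rw [Finset.sum_range_one, T_of_le (by omega : 4*0 ≤ 0)]
  have i1 : 0+0+m-1 = m-1 := by omega
  have i2 : 0-4*0 = 0 := by omega
  rw [i1, i2, Nat.choose_zero_right, cc_zero_eq m hm]
  simp

lemma A_n_zero (n : ℕ) : A n 0 = 0 := by
  rw [A]
  refine Finset.sum_eq_zero fun p _ => ?_
  rw [T]
  split_ifs with h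
  · rw [cc_m_zero, zero_mul]
  · rfl

lemma A_eq_R : ∀ n m : ℕ, 1 ≤ n ∨ 1 ≤ m → A n m = R n m := by
  intro n
  induction n using Nat.strong_induction_on with
  | _ n ih =>
    intro m hm
    cases n with
    | zero =>
      have hm1 : 1 ≤ m := by rcases hm with h | h; · omega
                             · exact h
      rw [A_zero m hm1, R_zero]
    | succ k =>
      clear hm
      induction m with
      | zero => rw [A_n_zero, R_n_zero _ (by omega)]
      | succ m ihm =>
        rw [A_rec (k+1) m (by omega), R_rec (k+1) m (by omega)]
        rw [ih ((k+1)-1) (by omega) (m+1) (by omega), ihm]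
        congr 1
        by_cases h4 : 4 ≤ k+1
        · rw [if_pos h4, if_pos h4, ih ((k+1)-4) (by omega) (m+5) (by omega)]
        · rw [if_neg h4, if_neg h4]


lemma LHS_eq (n m : ℕ) :
    (∑ p ∈ range (n/4+1), ((m:ℚ)/(5*p+m)) * (Nat.choose (5*p+m) p : ℚ) *
      (Nat.choose (n+p+m-1) (n-4*p) : ℚ)) = A n m := by
  have hsub : range (n/4+1) ⊆ range (n+1) := by
    intro x
    simp only [mem_range]
    omega
  rw [A, ← Finset.sum_subset hsub (fun x hx1 hx2 => T_of_gt (n := n) (m := m) (p := x) (by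
    simp only [mem_range, not_lt] at hx2
    omega))]
  refine Finset.sum_congr rfl fun p hp => ?_
  have h4p : 4*p ≤ n := by
    simp only [mem_range] at hp
    omega
  rw [T_of_le h4p, cc]

end FiveCatalanAux

end

open FiveCatalanAux in
/-- Identity (3) of the paper. -/
theorem sum_five_catalan_eq_alternating_sum (n m : ℕ) (hm : 1 ≤ m) :
    ∑ p ∈ Finset.range (n / 4 + 1),
      ((m : ℚ) / (5 * p + m)) * (Nat.choose (5 * p + m) p) *
        (Nat.choose (n + p + m - 1) (n - 4 * p))
      = ∑ p ∈ Finset.range (n / 2 + 1),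
          (-1 : ℚ) ^ p * ((m : ℚ) / (m + n)) * (Nat.choose (m + n + p - 1) p) *
            (Nat.choose (m + 2 * n - 2 * p - 1) (n - 2 * p)) := by
  rw [LHS_eq n m, RHS_eq n m hm]
  exact A_eq_R n m (Or.inr hm)
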